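/- For a fixed θ_{−i}, the map θᵢ ↦ p_S(θᵢ, θ_{−i}) is monotonically increasing, where p_S is the Clarke pivotal surplus for valuations v̄ᵢ(a,θᵢ) satisfying: v̄ᵢ(·,θᵢ) strictly concave, strictly increasing, continuously differentiable on [0,1]; θᵢ ↦ v̄ᵢ(aᵢ,θᵢ) absolutely continuous with bounded derivative; and aᵢ ↦ ∂v̄ᵢ(aᵢ,θᵢ)/∂θᵢ increasing. -/

import Mathlib

open MeasureTheory Set Filter Topology Function

section L6
lemma mono_deriv_ae {f : ℝ → ℝ} (hf : Monotone f) :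
    deriv f =ᵐ[volume] fun x => (hf.stieltjesFunction.measure.rnDeriv volume x).toReal := by
  filter_upwards [hf.ae_hasDerivAt] with x hx using hx.deriv

lemma mono_integrableOn_deriv {f : ℝ → ℝ} (hf : Monotone f) (a b : ℝ) :
    IntegrableOn (deriv f) (Set.Ioo a b) := by
  have hfin : hf.stieltjesFunction.measure (Set.Ioo a b) ≠ ⊤ := by
    rw [StieltjesFunction.measure_Ioo]; exact ENNReal.ofReal_ne_top
  exact (Measure.integrableOn_toReal_rnDeriv hfin).congr
    ((mono_deriv_ae hf).symm.filter_mono (ae_mono Measure.restrict_le_self))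

lemma mono_integral_deriv_le {f : ℝ → ℝ} (hf : Monotone f) {a b : ℝ} (hab : a ≤ b) :
    ∫ x in Set.Ioo a b, deriv f x ≤ f b - f a := by
  have hfin : hf.stieltjesFunction.measure (Set.Ioo a b) ≠ ⊤ := by
    rw [StieltjesFunction.measure_Ioo]; exact ENNReal.ofReal_ne_top
  have h1 : leftLim hf.stieltjesFunction b ≤ f b := by
    apply le_of_tendsto (hf.stieltjesFunction.mono.tendsto_leftLim b)
    filter_upwards [self_mem_nhdsWithin] with u hu
    exact hf.rightLim_le hu
  have h2 : f a ≤ hf.stieltjesFunction a := hf.le_rightLim le_rfl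
  calc ∫ x in Set.Ioo a b, deriv f x
      = ∫ x in Set.Ioo a b, (hf.stieltjesFunction.measure.rnDeriv volume x).toReal :=
        integral_congr_ae ((mono_deriv_ae hf).filter_mono (ae_mono Measure.restrict_le_self))
    _ ≤ (hf.stieltjesFunction.measure (Set.Ioo a b)).toReal :=
        Measure.setIntegral_toReal_rnDeriv_le hfin
    _ ≤ f b - f a := by
        rw [StieltjesFunction.measure_Ioo]
        rcases le_or_gt (leftLim hf.stieltjesFunction b - hf.stieltjesFunction a) 0 with h | h
        · rw [ENNReal.ofReal_eq_zero.2 h]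
          simpa using sub_nonneg.2 (hf hab)
        · rw [ENNReal.toReal_ofReal h.le]; linarith
end L6


lemma concave_shift {v : ℝ → ℝ} (hv : ConcaveOn ℝ (Set.Icc (0:ℝ) 1) v)
    {p q ε : ℝ} (hp : 0 ≤ p) (hpq : p ≤ q) (hε : 0 ≤ ε) (hq : q + ε ≤ 1) :
    v (q + ε) - v q ≤ v (p + ε) - v p := by
  rcases eq_or_lt_of_le hε with rfl | hε
  · simp
  rcases eq_or_lt_of_le hpq with rfl | hpq
  · simp
  have hd : 0 < q - p + ε := by linarith
  have hd' : q - p + ε ≠ 0 := ne_of_gt hd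
  have hmemp : p ∈ Set.Icc (0:ℝ) 1 := ⟨hp, by linarith⟩
  have hmemq : q + ε ∈ Set.Icc (0:ℝ) 1 := ⟨by linarith, hq⟩
  have ha : (0:ℝ) ≤ (q - p) / (q - p + ε) := div_nonneg (by linarith) hd.le
  have hb : (0:ℝ) ≤ ε / (q - p + ε) := div_nonneg hε.le hd.le
  have hab : (q - p) / (q - p + ε) + ε / (q - p + ε) = 1 := by field_simp
  have h1 := hv.2 hmemp hmemq ha hb hab
  have h2 := hv.2 hmemp hmemq hb ha (by linarith [hab])
  simp only [smul_eq_mul] at h1 h2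
  have e1 : (q - p) / (q - p + ε) * p + ε / (q - p + ε) * (q + ε) = p + ε := by
    field_simp; ring
  have e2 : ε / (q - p + ε) * p + (q - p) / (q - p + ε) * (q + ε) = q := by
    field_simp; ring
  rw [e1] at h1
  rw [e2] at h2
  set A := (q - p) / (q - p + ε) with hA
  set B := ε / (q - p + ε) with hB
  have hBA : B = 1 - A := by linarith
  have key : A * v p + B * v (q + ε) + (B * v p + A * v (q + ε)) = v p + v (q + ε) := by
    rw [hBA]; ring
  linarith [add_le_add h1 h2]

lemma strict_concave_gain {v : ℝ → ℝ} (hv : StrictConcaveOn ℝ (Set.Icc (0:ℝ) 1) v)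
    {p q ε : ℝ} (hp : 0 ≤ p) (hε : 0 < ε) (hpq : p + ε < q - ε) (hq : q ≤ 1) :
    v q - v (q - ε) < v (p + ε) - v p := by
  have hmem1 : p ∈ Set.Icc (0:ℝ) 1 := ⟨hp, by linarith⟩
  have hmem3 : q ∈ Set.Icc (0:ℝ) 1 := ⟨by linarith, hq⟩
  have s1 := hv.slope_anti_adjacent hmem1 (⟨by linarith, by linarith⟩ : (q - ε) ∈ Set.Icc (0:ℝ) 1)
    (by linarith : p < p + ε) hpq
  have s2 := hv.slope_anti_adjacent (⟨by linarith, by linarith⟩ : p + ε ∈ Set.Icc (0:ℝ) 1)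
    hmem3 hpq (by linarith : q - ε < q)
  have e1 : p + ε - p = ε := by ring
  have e2 : q - (q - ε) = ε := by ring
  rw [e1] at s1
  rw [e2] at s2
  have h := s2.trans s1
  have h2' := (div_lt_div_iff_of_pos_right hε).mp h
  linarith [h2']

lemma sum_one_update {n : ℕ} {s : Finset (Fin n)} (g : Fin n → ℝ → ℝ) (b : Fin n → ℝ)
    {i : Fin n} (hi : i ∈ s) (ci : ℝ) :
    ∑ j ∈ s, g j (Function.update b i ci j) = (∑ j ∈ s, g j (b j)) + (g i ci - g i (b i)) := by
  rw [← Finset.add_sum_erase _ _ hi, ← Finset.add_sum_erase _ (fun j => g j (b j)) hi]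
  have h1 : ∑ j ∈ s.erase i, g j (Function.update b i ci j) = ∑ j ∈ s.erase i, g j (b j) :=
    Finset.sum_congr rfl fun j hj => by
      rw [Function.update_apply, if_neg (Finset.ne_of_mem_erase hj)]
  rw [h1, Function.update_self]; ring

lemma sum_two_update {n : ℕ} {s : Finset (Fin n)} (g : Fin n → ℝ → ℝ) (b : Fin n → ℝ)
    {i l : Fin n} (hi : i ∈ s) (hl : l ∈ s) (hil : i ≠ l) (ci cl : ℝ) :
    ∑ j ∈ s, g j (Function.update (Function.update b i ci) l cl j)
      = (∑ j ∈ s, g j (b j)) + (g i ci - g i (b i)) + (g l cl - g l (b l)) := by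
  rw [sum_one_update g _ hl, sum_one_update g b hi]
  have e1 : Function.update b i ci l = b l := Function.update_of_ne (Ne.symm hil) _ _
  rw [e1]

lemma exchange {n : ℕ} (v : Fin n → ℝ → ℝ) (i k : Fin n) (hik : i ≠ k)
    (hvconc : ∀ j, ConcaveOn ℝ (Set.Icc (0:ℝ) 1) (v j))
    (hviconc : StrictConcaveOn ℝ (Set.Icc (0:ℝ) 1) (v i))
    (hvimono : StrictMonoOn (v i) (Set.Icc 0 1))
    (a b : Fin n → ℝ)
    (ha0 : ∀ j, 0 ≤ a j) (ha1 : ∑ j, a j ≤ 1)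
    (hb0 : ∀ j, 0 ≤ b j) (hb1 : ∑ j ∈ Finset.univ.erase k, b j ≤ 1)
    (haopt : ∀ c : Fin n → ℝ, (∀ j, 0 ≤ c j) → (∑ j, c j) ≤ 1 →
        ∑ j, v j (c j) ≤ ∑ j, v j (a j))
    (hbopt : ∀ c : Fin n → ℝ, (∀ j, 0 ≤ c j) → (∑ j ∈ Finset.univ.erase k, c j) ≤ 1 →
        ∑ j ∈ Finset.univ.erase k, v j (c j) ≤ ∑ j ∈ Finset.univ.erase k, v j (b j)) :
    a i ≤ b i := by
  by_contra hcon
  push_neg at hcon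
  have hiek : i ∈ Finset.univ.erase k := Finset.mem_erase.2 ⟨hik, Finset.mem_univ i⟩
  have hai1 : a i ≤ 1 :=
    le_trans (Finset.single_le_sum (fun j _ => ha0 j) (Finset.mem_univ i)) ha1
  have hbi : b i ≤ ∑ j ∈ Finset.univ.erase k, b j :=
    Finset.single_le_sum (fun j _ => hb0 j) hiek
  -- Step A: the reduced optimum saturates the budget
  have hsat : ∑ j ∈ Finset.univ.erase k, b j = 1 := by
    by_contra hne
    have hlt : ∑ j ∈ Finset.univ.erase k, b j < 1 := lt_of_le_of_ne hb1 hne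
    set δ := min (1 - ∑ j ∈ Finset.univ.erase k, b j) (1 - b i) with hδ
    have hδpos : 0 < δ := lt_min (by linarith) (by linarith [lt_of_le_of_lt hbi hlt])
    set c := Function.update b i (b i + δ) with hc
    have hc0 : ∀ j, 0 ≤ c j := by
      intro j; rw [hc, Function.update_apply]
      split
      · linarith [hb0 i]
      · exact hb0 j
    have hcsum : ∑ j ∈ Finset.univ.erase k, c j ≤ 1 := by
      rw [hc, sum_one_update (fun _ x => x) b hiek]
      have : δ ≤ 1 - ∑ j ∈ Finset.univ.erase k, b j := min_le_left _ _
      linarith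
    have hval := hbopt c hc0 hcsum
    rw [hc, sum_one_update (fun j x => v j x) b hiek] at hval
    have : v i (b i) < v i (b i + δ) := by
      apply hvimono ⟨hb0 i, by linarith [lt_of_le_of_lt hbi hlt]⟩
        ⟨by linarith [hb0 i], by linarith [min_le_right (1 - ∑ j ∈ Finset.univ.erase k, b j) (1 - b i)]⟩
      linarith
    linarith
  -- Step B: find l with b l > a l
  have hexl : ∃ l ∈ Finset.univ.erase k, l ≠ i ∧ a l < b l := by
    by_contra hno
    push_neg at hno
    have hsum_le : ∑ j ∈ (Finset.univ.erase k).erase i, b j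
        ≤ ∑ j ∈ (Finset.univ.erase k).erase i, a j := by
      apply Finset.sum_le_sum
      intro j hj
      rcases Finset.mem_erase.1 hj with ⟨hji, hjk⟩
      exact (hno j hjk hji)
    have h1 : ∑ j ∈ Finset.univ.erase k, b j
        = b i + ∑ j ∈ (Finset.univ.erase k).erase i, b j :=
      (Finset.add_sum_erase _ _ hiek).symm
    have h2 : ∑ j ∈ Finset.univ.erase k, a j
        = a i + ∑ j ∈ (Finset.univ.erase k).erase i, a j :=
      (Finset.add_sum_erase _ _ hiek).symm
    have h3 : ∑ j ∈ Finset.univ.erase k, a j ≤ ∑ j, a j :=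
      Finset.sum_le_sum_of_subset_of_nonneg (Finset.erase_subset _ _) (fun j _ _ => ha0 j)
    linarith
  obtain ⟨l, hlek, hli, hal⟩ := hexl
  -- Step C: exchange
  set ε := min ((a i - b i) / 3) (b l - a l) with hε
  have hεpos : 0 < ε := lt_min (by linarith) (by linarith)
  have hε3 : ε ≤ (a i - b i) / 3 := min_le_left _ _
  have hεl : ε ≤ b l - a l := min_le_right _ _
  have hbl1 : b l ≤ 1 := le_trans (Finset.single_le_sum (fun j _ => hb0 j) hlek) hb1
  -- optimality of a gives the middle inequality
  have hmid : v l (a l + ε) - v l (a l) ≤ v i (a i) - v i (a i - ε) := by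
    set c := Function.update (Function.update a i (a i - ε)) l (a l + ε) with hc
    have hc0 : ∀ j, 0 ≤ c j := by
      intro j
      rw [hc, Function.update_apply]
      split
      · linarith [ha0 l]
      · rw [Function.update_apply]; split
        · linarith [hb0 i]
        · exact ha0 j
    have hcsum : ∑ j, c j ≤ 1 := by
      rw [hc, sum_two_update (fun _ x => x) a (Finset.mem_univ i) (Finset.mem_univ l)
        (fun h => hli (h.symm)) _ _]
      linarith
    have hval := haopt c hc0 hcsum
    rw [hc, sum_two_update (fun j x => v j x) a (Finset.mem_univ i) (Finset.mem_univ l)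
      (fun h => hli (h.symm)) _ _] at hval
    linarith
  -- strict concavity gain for i
  have hstrict : v i (a i) - v i (a i - ε) < v i (b i + ε) - v i (b i) := by
    have := strict_concave_gain hviconc (hb0 i) hεpos
      (by linarith : b i + ε < a i - ε) hai1
    linarith [this]
  -- weak concavity for l
  have hweak : v l (b l) - v l (b l - ε) ≤ v l (a l + ε) - v l (a l) := by
    have := concave_shift (hvconc l) (ha0 l) (by linarith : a l ≤ b l - ε) hεpos.le
      (by linarith : (b l - ε) + ε ≤ 1)
    simpa using this
  -- improving exchange in b : contradiction
  set c := Function.update (Function.update b i (b i + ε)) l (b l - ε) with hc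
  have hc0 : ∀ j, 0 ≤ c j := by
    intro j
    rw [hc, Function.update_apply]
    split
    · linarith [ha0 l]
    · rw [Function.update_apply]; split
      · linarith [hb0 i]
      · exact hb0 j
  have hcsum : ∑ j ∈ Finset.univ.erase k, c j ≤ 1 := by
    rw [hc, sum_two_update (fun _ x => x) b hiek hlek (fun h => hli (h.symm)) _ _]
    linarith [hsat]
  have hval := hbopt c hc0 hcsum
  rw [hc, sum_two_update (fun j x => v j x) b hiek hlek (fun h => hli (h.symm)) _ _] at hval
  linarith

/-- The core analytic comparison: if `F` and `G` are envelope ("max") functions whose marginal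
envelope bounds are driven by allocations `x s ≤ y s`, then `G` increases at least as fast
as `F`. -/
lemma key_ineq (vb : ℝ → ℝ → ℝ) (D0 : ℝ → ℝ → ℝ)
    (hD : ∀ a ∈ Set.Icc (0:ℝ) 1, ∀ u : ℝ, HasDerivAt (fun s => vb a s) (D0 a u) u)
    (hDmono : ∀ u : ℝ, MonotoneOn (fun a => D0 a u) (Set.Icc 0 1))
    (F G : ℝ → ℝ) (x y : ℝ → ℝ)
    (hx : ∀ s, x s ∈ Set.Icc (0:ℝ) 1) (hy : ∀ s, y s ∈ Set.Icc (0:ℝ) 1)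
    (hEF : ∀ s u, F s + (vb (x s) u - vb (x s) s) ≤ F u)
    (hEG : ∀ s u, G s + (vb (y s) u - vb (y s) s) ≤ G u)
    {t t' : ℝ} (htt' : t ≤ t')
    (hxy : ∀ s, t < s → s < t' → x s ≤ y s) :
    F t' - F t ≤ G t' - G t := by
  have mem0 : (0:ℝ) ∈ Set.Icc (0:ℝ) 1 := ⟨le_refl 0, zero_le_one⟩
  have mem1 : (1:ℝ) ∈ Set.Icc (0:ℝ) 1 := ⟨zero_le_one, le_refl 1⟩
  -- auxiliary monotonicity in u of differences of vb
  have haux : ∀ a1 a2 : ℝ, a1 ∈ Set.Icc (0:ℝ) 1 → a2 ∈ Set.Icc (0:ℝ) 1 → a1 ≤ a2 →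
      Monotone (fun u => vb a2 u - vb a1 u) := by
    intro a1 a2 h1 h2 h12
    apply monotone_of_deriv_nonneg
    · exact fun u => ((hD a2 h2 u).sub (hD a1 h1 u)).differentiableAt
    · intro u
      rw [((hD a2 h2 u).fun_sub (hD a1 h1 u)).deriv]
      exact sub_nonneg.2 (hDmono u h1 h2 h12)
  -- monotone normalized envelopes
  have hFh_mono : Monotone (fun s => F s - vb 0 s) := by
    intro s u hsu
    dsimp only
    have h2 : vb (x s) s - vb 0 s ≤ vb (x s) u - vb 0 u :=
      haux 0 (x s) mem0 (hx s) (hx s).1 hsu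
    linarith [hEF s u]
  have hGh_mono : Monotone (fun s => G s - vb 0 s) := by
    intro s u hsu
    dsimp only
    have h2 : vb (y s) s - vb 0 s ≤ vb (y s) u - vb 0 u :=
      haux 0 (y s) mem0 (hy s) (hy s).1 hsu
    linarith [hEG s u]
  have hWF_mono : Monotone (fun s => vb 1 s - F s) := by
    intro s u hsu
    dsimp only
    have h2 : vb 1 s - vb (x u) s ≤ vb 1 u - vb (x u) u :=
      haux (x u) 1 (hx u) mem1 (hx u).2 hsu
    linarith [hEF u s]
  have hWG_mono : Monotone (fun s => vb 1 s - G s) := by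
    intro s u hsu
    dsimp only
    have h2 : vb 1 s - vb (y u) s ≤ vb 1 u - vb (y u) u :=
      haux (y u) 1 (hy u) mem1 (hy u).2 hsu
    linarith [hEG u s]
  -- derivative identities at differentiability points
  have hFd : ∀ s : ℝ, DifferentiableAt ℝ (fun u => F u - vb 0 u) s →
      deriv (fun u => F u - vb 0 u) s = D0 (x s) s - D0 0 s := by
    intro s hdiff
    have hh : HasDerivAt (fun u => vb (x s) u - vb 0 u) (D0 (x s) s - D0 0 s) s :=
      (hD (x s) (hx s) s).sub (hD 0 mem0 s)
    have hmin0 : ∀ u, (F s - vb 0 s) - (vb (x s) s - vb 0 s)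
        ≤ (F u - vb 0 u) - (vb (x s) u - vb 0 u) := fun u => by linarith [hEF s u]
    have hmin : IsLocalMin (fun u => (F u - vb 0 u) - (vb (x s) u - vb 0 u)) s :=
      Filter.Eventually.of_forall hmin0
    have h0 := hmin.deriv_eq_zero
    rw [deriv_fun_sub hdiff hh.differentiableAt, hh.deriv] at h0
    linarith
  have hGd : ∀ s : ℝ, DifferentiableAt ℝ (fun u => G u - vb 0 u) s →
      deriv (fun u => G u - vb 0 u) s = D0 (y s) s - D0 0 s := by
    intro s hdiff
    have hh : HasDerivAt (fun u => vb (y s) u - vb 0 u) (D0 (y s) s - D0 0 s) s :=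
      (hD (y s) (hy s) s).sub (hD 0 mem0 s)
    have hmin0 : ∀ u, (G s - vb 0 s) - (vb (y s) s - vb 0 s)
        ≤ (G u - vb 0 u) - (vb (y s) u - vb 0 u) := fun u => by linarith [hEG s u]
    have hmin : IsLocalMin (fun u => (G u - vb 0 u) - (vb (y s) u - vb 0 u)) s :=
      Filter.Eventually.of_forall hmin0
    have h0 := hmin.deriv_eq_zero
    rw [deriv_fun_sub hdiff hh.differentiableAt, hh.deriv] at h0
    linarith
  -- the reference differentiable monotone function W
  have hWder : ∀ u : ℝ, HasDerivAt (fun w => vb 1 w - vb 0 w) (D0 1 u - D0 0 u) u :=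
    fun u => (hD 1 mem1 u).sub (hD 0 mem0 u)
  have hW_mono : Monotone (fun w => vb 1 w - vb 0 w) := haux 0 1 mem0 mem1 zero_le_one
  have hWdint : IntegrableOn (fun u => D0 1 u - D0 0 u) (Set.Ioo t t') := by
    have h1 := mono_integrableOn_deriv hW_mono t t'
    have h2 : deriv (fun w => vb 1 w - vb 0 w) = fun u => D0 1 u - D0 0 u :=
      funext fun u => (hWder u).deriv
    rwa [h2] at h1
  have hFTC : ∫ u in Set.Ioo t t', (D0 1 u - D0 0 u)
      = (vb 1 t' - vb 0 t') - (vb 1 t - vb 0 t) := by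
    have h1 : ∫ u in t..t', (D0 1 u - D0 0 u)
        = (vb 1 t' - vb 0 t') - (vb 1 t - vb 0 t) :=
      intervalIntegral.integral_eq_sub_of_hasDerivAt (fun u _ => hWder u)
        ((intervalIntegrable_iff_integrableOn_Ioc_of_le htt').2
          ((integrableOn_Ioc_iff_integrableOn_Ioo (by simp)).2 hWdint))
    rw [intervalIntegral.integral_of_le htt', integral_Ioc_eq_integral_Ioo] at h1
    exact h1
  -- integrability of the a.e. derivatives
  have hFint : IntegrableOn (deriv (fun u => F u - vb 0 u)) (Set.Ioo t t') :=
    mono_integrableOn_deriv hFh_mono t t'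
  have hGint : IntegrableOn (deriv (fun u => G u - vb 0 u)) (Set.Ioo t t') :=
    mono_integrableOn_deriv hGh_mono t t'
  -- a.e. comparison of derivatives
  have haecmp : (deriv (fun u => F u - vb 0 u)) ≤ᵐ[volume.restrict (Set.Ioo t t')]
      (deriv (fun u => G u - vb 0 u)) := by
    refine (ae_restrict_iff' measurableSet_Ioo).2 ?_
    filter_upwards [hFh_mono.ae_differentiableAt.and hGh_mono.ae_differentiableAt]
      with s hs hsI
    rw [hFd s hs.1, hGd s hs.2]
    have hc := hDmono s (hx s) (hy s) (hxy s hsI.1 hsI.2)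
    simp only at hc
    linarith
  have hcmp : ∫ s in Set.Ioo t t', deriv (fun u => F u - vb 0 u) s
      ≤ ∫ s in Set.Ioo t t', deriv (fun u => G u - vb 0 u) s :=
    integral_mono_ae hFint hGint haecmp
  -- upper bound for G-side
  have hGup : ∫ s in Set.Ioo t t', deriv (fun u => G u - vb 0 u) s
      ≤ (G t' - vb 0 t') - (G t - vb 0 t) := mono_integral_deriv_le hGh_mono htt'
  -- lower bound for F-side
  have hFlow : (F t' - vb 0 t') - (F t - vb 0 t)
      ≤ ∫ s in Set.Ioo t t', deriv (fun u => F u - vb 0 u) s := by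
    have hWFle : ∫ s in Set.Ioo t t', deriv (fun u => vb 1 u - F u) s
        ≤ (vb 1 t' - F t') - (vb 1 t - F t) := mono_integral_deriv_le hWF_mono htt'
    have haeWF : (deriv (fun u => vb 1 u - F u))
        =ᵐ[volume.restrict (Set.Ioo t t')]
        (fun s => (D0 1 s - D0 0 s) - deriv (fun u => F u - vb 0 u) s) := by
      filter_upwards [hFh_mono.ae_differentiableAt.filter_mono
        (ae_mono Measure.restrict_le_self)] with s hs
      have hfe : (fun u => vb 1 u - F u)
          = fun u => (vb 1 u - vb 0 u) - (F u - vb 0 u) := funext fun u => by ring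
      rw [hfe, deriv_fun_sub (hWder s).differentiableAt hs, (hWder s).deriv]
    have hsplit : ∫ s in Set.Ioo t t', deriv (fun u => vb 1 u - F u) s
        = (∫ s in Set.Ioo t t', (D0 1 s - D0 0 s))
          - ∫ s in Set.Ioo t t', deriv (fun u => F u - vb 0 u) s := by
      rw [integral_congr_ae haeWF]
      exact integral_sub hWdint hFint
    rw [hsplit, hFTC] at hWFle
    linarith
  linarith





/-- for fixed θ_{-i}, the Clarke pivotal surplus p_S is monotonically
increasing in θ_i, under regularity assumptions on the surrogate valuations v̄ᵢ. -/
theorem pS_monotone {n : ℕ} (hn : 2 ≤ n)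
    (vbar : Fin n → ℝ → ℝ → ℝ)  -- vbar i a t : valuation of agent i at allocation a, parameter t
    (Dt : Fin n → ℝ → ℝ → ℝ)    -- ∂ vbar i a t / ∂ t
    (hconc : ∀ i t, 0 < t → StrictConcaveOn ℝ (Set.Icc (0:ℝ) 1) (fun a => vbar i a t))
    (hmono : ∀ i t, 0 < t → StrictMonoOn (fun a => vbar i a t) (Set.Icc 0 1))
    (hdiff : ∀ i t, 0 < t → ContDiffOn ℝ 1 (fun a => vbar i a t) (Set.Icc 0 1))
    (hDt : ∀ i a t, a ∈ Set.Icc (0:ℝ) 1 → HasDerivAt (fun s => vbar i a s) (Dt i a t) t)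
    (hB : ∀ i, ∃ B : ℝ → ℝ, ∀ a ∈ Set.Icc (0:ℝ) 1, ∀ t, |Dt i a t| ≤ B t)
    (hDtmono : ∀ i t, MonotoneOn (fun a => Dt i a t) (Set.Icc 0 1))
    (astar : (Fin n → ℝ) → Fin n → ℝ)
    (hastarfeas : ∀ θ, (∀ j, 0 ≤ astar θ j) ∧ (∑ j, astar θ j) ≤ 1)
    (hastar : ∀ θ : Fin n → ℝ,
      IsGreatest {w | ∃ a : Fin n → ℝ, (∀ j, 0 ≤ a j) ∧ (∑ j, a j) ≤ 1 ∧
        w = ∑ j, vbar j (a j) (θ j)} (∑ j, vbar j (astar θ j) (θ j)))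
    (astarm : Fin n → (Fin n → ℝ) → Fin n → ℝ)
    (hastarmfeas : ∀ i θ, (∀ j, 0 ≤ astarm i θ j) ∧ (∑ j ∈ Finset.univ.erase i, astarm i θ j) ≤ 1)
    (hastarm : ∀ (i : Fin n) (θ : Fin n → ℝ),
      IsGreatest {w | ∃ a : Fin n → ℝ, (∀ j, 0 ≤ a j) ∧ (∑ j ∈ Finset.univ.erase i, a j) ≤ 1 ∧
        w = ∑ j ∈ Finset.univ.erase i, vbar j (a j) (θ j)}
        (∑ j ∈ Finset.univ.erase i, vbar j (astarm i θ j) (θ j)))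
    (hastarmInd : ∀ i θ θ', (∀ j, j ≠ i → θ j = θ' j) → astarm i θ = astarm i θ')
    (pS : (Fin n → ℝ) → ℝ)
    (hpS : ∀ θ, pS θ = -((n : ℝ) - 1) * (∑ j, vbar j (astar θ j) (θ j))
        + ∑ i, ∑ j ∈ Finset.univ.erase i, vbar j (astarm i θ j) (θ j)) :
    ∀ (i : Fin n) (θ : Fin n → ℝ), (∀ j, 0 ≤ θ j) →
      ∀ t t' : ℝ, 0 ≤ t → t ≤ t' →
        pS (Function.update θ i t) ≤ pS (Function.update θ i t') := by
  intro i θ hθ t t' ht htt'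
  have hupd_i : ∀ s : ℝ, Function.update θ i s i = s := fun s => Function.update_self i s θ
  have hupd_ne : ∀ (s : ℝ) (j : Fin n), j ≠ i → Function.update θ i s j = θ j :=
    fun s j hj => Function.update_of_ne hj s θ
  -- weak concavity for all nonnegative types (limit argument at τ = 0)
  have hconc' : ∀ (j : Fin n) (τ : ℝ), 0 ≤ τ →
      ConcaveOn ℝ (Set.Icc (0:ℝ) 1) (fun a => vbar j a τ) := by
    intro j τ hτ
    rcases hτ.lt_or_eq with h | h
    · exact (hconc j τ h).concaveOn
    · subst h
      refine ⟨convex_Icc 0 1, ?_⟩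
      intro a ha b hb α β hα hβ hαβ
      have hmem : α • a + β • b ∈ Set.Icc (0:ℝ) 1 := (convex_Icc 0 1) ha hb hα hβ hαβ
      have hten : ∀ c, c ∈ Set.Icc (0:ℝ) 1 →
          Filter.Tendsto (fun u => vbar j c u) (nhdsWithin 0 (Set.Ioi 0))
            (nhds (vbar j c 0)) :=
        fun c hc => ((hDt j c 0 hc).continuousAt.tendsto).mono_left nhdsWithin_le_nhds
      refine le_of_tendsto_of_tendsto
        (((hten a ha).const_smul α).add ((hten b hb).const_smul β)) (hten _ hmem) ?_
      filter_upwards [self_mem_nhdsWithin] with u hu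
      exact ((hconc j u hu).concaveOn).2 ha hb hα hβ hαβ
  -- memberships of allocations
  have hxmem : ∀ s : ℝ, astar (Function.update θ i s) i ∈ Set.Icc (0:ℝ) 1 := fun s =>
    ⟨(hastarfeas _).1 i,
      le_trans (Finset.single_le_sum (fun j _ => (hastarfeas _).1 j) (Finset.mem_univ i))
        (hastarfeas _).2⟩
  -- the key per-agent inequality
  have hkey : ∀ k : Fin n, k ≠ i →
      (∑ j, vbar j (astar (Function.update θ i t') j) (Function.update θ i t' j))
      - (∑ j, vbar j (astar (Function.update θ i t) j) (Function.update θ i t j))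
      ≤ (∑ j ∈ Finset.univ.erase k,
          vbar j (astarm k (Function.update θ i t') j) (Function.update θ i t' j))
        - (∑ j ∈ Finset.univ.erase k,
          vbar j (astarm k (Function.update θ i t) j) (Function.update θ i t j)) := by
    intro k hk
    have hik : i ≠ k := Ne.symm hk
    have hiek : i ∈ Finset.univ.erase k := Finset.mem_erase.2 ⟨hik, Finset.mem_univ i⟩
    have hymem : ∀ s : ℝ, astarm k (Function.update θ i s) i ∈ Set.Icc (0:ℝ) 1 := fun s =>
      ⟨(hastarmfeas k _).1 i,
        le_trans (Finset.single_le_sum (fun j _ => (hastarmfeas k _).1 j) hiek)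
          (hastarmfeas k _).2⟩
    -- envelope inequality for the full problem
    have hEF : ∀ s u : ℝ,
        (∑ j, vbar j (astar (Function.update θ i s) j) (Function.update θ i s j))
          + (vbar i (astar (Function.update θ i s) i) u
            - vbar i (astar (Function.update θ i s) i) s)
        ≤ ∑ j, vbar j (astar (Function.update θ i u) j) (Function.update θ i u j) := by
      intro s u
      have hle := (hastar (Function.update θ i u)).2
        ⟨astar (Function.update θ i s), (hastarfeas _).1, (hastarfeas _).2, rfl⟩
      have esplit : ∀ w : ℝ,
          ∑ j, vbar j (astar (Function.update θ i s) j) (Function.update θ i w j)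
          = vbar i (astar (Function.update θ i s) i) w
            + ∑ j ∈ Finset.univ.erase i, vbar j (astar (Function.update θ i s) j) (θ j) := by
        intro w
        rw [← Finset.add_sum_erase Finset.univ _ (Finset.mem_univ i), hupd_i w]
        congr 1
        exact Finset.sum_congr rfl fun j hj => by
          rw [hupd_ne w j (Finset.ne_of_mem_erase hj)]
      rw [esplit s] at *
      rw [esplit u] at hle
      linarith
    -- envelope inequality for the reduced problem
    have hEG : ∀ s u : ℝ,
        (∑ j ∈ Finset.univ.erase k,
            vbar j (astarm k (Function.update θ i s) j) (Function.update θ i s j))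
          + (vbar i (astarm k (Function.update θ i s) i) u
            - vbar i (astarm k (Function.update θ i s) i) s)
        ≤ ∑ j ∈ Finset.univ.erase k,
            vbar j (astarm k (Function.update θ i u) j) (Function.update θ i u j) := by
      intro s u
      have hle := (hastarm k (Function.update θ i u)).2
        ⟨astarm k (Function.update θ i s), (hastarmfeas k _).1, (hastarmfeas k _).2, rfl⟩
      have esplit : ∀ w : ℝ,
          ∑ j ∈ Finset.univ.erase k,
            vbar j (astarm k (Function.update θ i s) j) (Function.update θ i w j)
          = vbar i (astarm k (Function.update θ i s) i) w
            + ∑ j ∈ (Finset.univ.erase k).erase i,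
                vbar j (astarm k (Function.update θ i s) j) (θ j) := by
        intro w
        rw [← Finset.add_sum_erase _ _ hiek, hupd_i w]
        congr 1
        exact Finset.sum_congr rfl fun j hj => by
          rw [hupd_ne w j (Finset.ne_of_mem_erase hj)]
      rw [esplit s] at *
      rw [esplit u] at hle
      linarith
    -- comparison of allocations via the exchange argument
    have hxy : ∀ s : ℝ, t < s → s < t' →
        astar (Function.update θ i s) i ≤ astarm k (Function.update θ i s) i := by
      intro s hts hst'
      have hspos : 0 < s := lt_of_le_of_lt ht hts
      have hvconcs : ∀ j : Fin n,
          ConcaveOn ℝ (Set.Icc (0:ℝ) 1) (fun a => vbar j a (Function.update θ i s j)) := by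
        intro j
        rcases eq_or_ne j i with rfl | hj
        · rw [hupd_i s]; exact hconc' j s hspos.le
        · rw [hupd_ne s j hj]; exact hconc' j (θ j) (hθ j)
      have hvic : StrictConcaveOn ℝ (Set.Icc (0:ℝ) 1)
          (fun a => vbar i a (Function.update θ i s i)) := by
        rw [hupd_i s]; exact hconc i s hspos
      have hvim : StrictMonoOn (fun a => vbar i a (Function.update θ i s i))
          (Set.Icc (0:ℝ) 1) := by
        rw [hupd_i s]; exact hmono i s hspos
      exact exchange (fun j a => vbar j a (Function.update θ i s j)) i k hik
        hvconcs hvic hvim (astar (Function.update θ i s)) (astarm k (Function.update θ i s))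
        (hastarfeas _).1 (hastarfeas _).2 (hastarmfeas k _).1 (hastarmfeas k _).2
        (fun c h0 h1 => (hastar (Function.update θ i s)).2 ⟨c, h0, h1, rfl⟩)
        (fun c h0 h1 => (hastarm k (Function.update θ i s)).2 ⟨c, h0, h1, rfl⟩)
    have := key_ineq (vbar i) (Dt i) (fun a ha u => hDt i a u ha) (fun u => hDtmono i u)
      (fun s => ∑ j, vbar j (astar (Function.update θ i s) j) (Function.update θ i s j))
      (fun s => ∑ j ∈ Finset.univ.erase k,
        vbar j (astarm k (Function.update θ i s) j) (Function.update θ i s j))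
      (fun s => astar (Function.update θ i s) i)
      (fun s => astarm k (Function.update θ i s) i)
      hxmem hymem hEF hEG htt' hxy
    simpa using this
  -- the term k = i does not change
  have hGi_eq : (∑ j ∈ Finset.univ.erase i,
        vbar j (astarm i (Function.update θ i t') j) (Function.update θ i t' j))
      = ∑ j ∈ Finset.univ.erase i,
        vbar j (astarm i (Function.update θ i t) j) (Function.update θ i t j) := by
    have hupd : astarm i (Function.update θ i t') = astarm i (Function.update θ i t) :=
      hastarmInd i _ _ (fun j hj => by rw [hupd_ne t' j hj, hupd_ne t j hj])
    exact Finset.sum_congr rfl fun j hj => by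
      rw [hupd, hupd_ne t' j (Finset.ne_of_mem_erase hj), hupd_ne t j (Finset.ne_of_mem_erase hj)]
  -- assembly
  rw [hpS, hpS]
  have e3 : (∑ k, ∑ j ∈ Finset.univ.erase k,
        vbar j (astarm k (Function.update θ i t) j) (Function.update θ i t j))
      = (∑ j ∈ Finset.univ.erase i,
          vbar j (astarm i (Function.update θ i t) j) (Function.update θ i t j))
        + ∑ k ∈ Finset.univ.erase i, ∑ j ∈ Finset.univ.erase k,
            vbar j (astarm k (Function.update θ i t) j) (Function.update θ i t j) :=
    (Finset.add_sum_erase _ _ (Finset.mem_univ i)).symm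
  have e4 : (∑ k, ∑ j ∈ Finset.univ.erase k,
        vbar j (astarm k (Function.update θ i t') j) (Function.update θ i t' j))
      = (∑ j ∈ Finset.univ.erase i,
          vbar j (astarm i (Function.update θ i t') j) (Function.update θ i t' j))
        + ∑ k ∈ Finset.univ.erase i, ∑ j ∈ Finset.univ.erase k,
            vbar j (astarm k (Function.update θ i t') j) (Function.update θ i t' j) :=
    (Finset.add_sum_erase _ _ (Finset.mem_univ i)).symm
  have hcard : ((Finset.univ.erase i).card : ℝ) = (n : ℝ) - 1 := by
    rw [Finset.card_erase_of_mem (Finset.mem_univ i), Finset.card_univ, Fintype.card_fin]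
    rw [Nat.cast_sub (by omega : 1 ≤ n), Nat.cast_one]
  have e5 : ((n:ℝ) - 1) *
        ((∑ j, vbar j (astar (Function.update θ i t') j) (Function.update θ i t' j))
          - ∑ j, vbar j (astar (Function.update θ i t) j) (Function.update θ i t j))
      ≤ (∑ k ∈ Finset.univ.erase i, ∑ j ∈ Finset.univ.erase k,
            vbar j (astarm k (Function.update θ i t') j) (Function.update θ i t' j))
        - ∑ k ∈ Finset.univ.erase i, ∑ j ∈ Finset.univ.erase k,
            vbar j (astarm k (Function.update θ i t) j) (Function.update θ i t j) := by
    have h := Finset.sum_le_sum (s := Finset.univ.erase i)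
      (f := fun _ : Fin n =>
        (∑ j, vbar j (astar (Function.update θ i t') j) (Function.update θ i t' j))
          - ∑ j, vbar j (astar (Function.update θ i t) j) (Function.update θ i t j))
      (g := fun k =>
        (∑ j ∈ Finset.univ.erase k,
          vbar j (astarm k (Function.update θ i t') j) (Function.update θ i t' j))
        - ∑ j ∈ Finset.univ.erase k,
          vbar j (astarm k (Function.update θ i t) j) (Function.update θ i t j))
      (fun k hk => hkey k (Finset.ne_of_mem_erase hk))
    rw [Finset.sum_const, nsmul_eq_mul, Finset.sum_sub_distrib] at h
    rw [hcard] at h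
    exact h
  linarith [e3, e4, e5, hGi_eq]
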